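/- Let π_X be a probability measure on ℝ^{d_x}, let A ∈ ℝ^{d_y×d_x} be a matrix, fix y ∈ ℝ^{d_y}, m ∈ ℝ^{d_x}, and σ_e, σ₁ > 0. Define the Gaussian likelihood p(x) = (2π σ_e²)^{−d_y/2} exp(−‖y − A x‖²/(2 σ_e²)) and the marginal π_Y(y) = ∫ p(x) dπ_X(x), and assume 0 < π_Y(y) < ∞. Let q be a probability measure on ℝ^{d_x} with mean m and covariance σ₁² I, absolutely continuous with respect to π_X and with KL(q, π_X) < ∞. Then −log π_Y(y) ≤ KL(q, π_X) + (1/(2 σ_e²)) ‖y − A m‖² + c₁, where c₁ = (d_y/2) log(2π σ_e²) + σ₁² trace(AᵀA)/(2 σ_e²). -/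

import Mathlib

open MeasureTheory Matrix

/-- **Bound on the negative data log-likelihood.** With Gaussian likelihood
`p(x) = (2πσₑ²)^{-d_y/2} exp(-‖y - A x‖²/(2σₑ²))` and marginal `π_Y(y) = ∫ p dπ_X`,
for any probability measure `q ≪ π_X` with mean `m`, covariance `σ₁² I` and finite KL
divergence, `-log π_Y(y) ≤ KL(q, π_X) + ‖y - A m‖²/(2σₑ²) + c₁`, where
`c₁ = (d_y/2) log(2πσₑ²) + σ₁² trace(AᵀA)/(2σₑ²)`. -/
theorem neg_log_data_likelihood_bound
    {dx dy : ℕ} (πX q : Measure (Fin dx → ℝ))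
    [IsProbabilityMeasure πX] [IsProbabilityMeasure q]
    (A : Matrix (Fin dy) (Fin dx) ℝ) (y : Fin dy → ℝ) (m : Fin dx → ℝ)
    (σe σ₁ : ℝ) (hσe : 0 < σe) (hσ₁ : 0 < σ₁)
    (p : (Fin dx → ℝ) → ℝ)
    (hp : p = fun x => (2 * Real.pi * σe ^ 2) ^ (-(dy : ℝ) / 2)
        * Real.exp (-(∑ i, (y i - A.mulVec x i) ^ 2) / (2 * σe ^ 2)))
    (hp_int : Integrable p πX) (hπY_pos : 0 < ∫ x, p x ∂πX)
    (hq_mean_int : ∀ i, Integrable (fun x => x i) q)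
    (hq_mean : ∀ i, ∫ x, x i ∂q = m i)
    (hq_cov_int : ∀ i j, Integrable (fun x => (x i - m i) * (x j - m j)) q)
    (hq_cov : ∀ i j, ∫ x, (x i - m i) * (x j - m j) ∂q
      = (σ₁ ^ 2 • (1 : Matrix (Fin dx) (Fin dx) ℝ)) i j)
    (hac : q ≪ πX)
    (hKL_int : Integrable (fun x => Real.log ((q.rnDeriv πX x).toReal)) q) :
    -Real.log (∫ x, p x ∂πX)
      ≤ (∫ x, Real.log ((q.rnDeriv πX x).toReal) ∂q)
        + (1 / (2 * σe ^ 2)) * ∑ i, (y i - A.mulVec m i) ^ 2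
        + ((dy : ℝ) / 2 * Real.log (2 * Real.pi * σe ^ 2)
            + σ₁ ^ 2 * (Aᵀ * A).trace / (2 * σe ^ 2)) := by
  have h2π : (0:ℝ) < 2 * Real.pi * σe ^ 2 := by positivity
  set c : ℝ := (2 * Real.pi * σe ^ 2) ^ (-(dy : ℝ) / 2) with hcdef
  have hcpos : 0 < c := Real.rpow_pos_of_pos h2π _
  have hppos : ∀ x, 0 < p x := by
    intro x; rw [hp]
    exact mul_pos hcpos (Real.exp_pos _)
  -- centered coordinates
  have hw_int : ∀ j, Integrable (fun x => x j - m j) q :=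
    fun j => (hq_mean_int j).sub (integrable_const _)
  have hw_mean : ∀ j, ∫ x, (x j - m j) ∂q = 0 := by
    intro j
    rw [integral_sub (hq_mean_int j) (integrable_const _), hq_mean, integral_const]
    simp
  -- per-coordinate second moment
  have key : ∀ i, Integrable (fun x => (y i - A.mulVec x i)^2) q ∧
      ∫ x, (y i - A.mulVec x i)^2 ∂q
        = (y i - A.mulVec m i)^2 + σ₁^2 * ∑ j, (A i j)^2 := by
    intro i
    set u : (Fin dx → ℝ) → ℝ := fun x => ∑ j, A i j * (x j - m j) with hudef
    have hrw : ∀ x, (y i - A.mulVec x i)^2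
        = (y i - A.mulVec m i)^2 - (2*(y i - A.mulVec m i)) * u x + u x ^ 2 := by
      intro x
      have h1 : u x = A.mulVec x i - A.mulVec m i := by
        simp [hudef, Matrix.mulVec, dotProduct, mul_sub, Finset.sum_sub_distrib]
      rw [h1]; ring
    have hu_int : Integrable u q :=
      integrable_finset_sum _ (fun j _ => (hw_int j).const_mul _)
    have hu_mean : ∫ x, u x ∂q = 0 := by
      rw [integral_finset_sum _ (fun j _ => (hw_int j).const_mul _)]
      simp only [integral_const_mul, hw_mean, mul_zero, Finset.sum_const_zero]
    have hu2eq : (fun x => u x ^ 2)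
        = fun x => ∑ j, ∑ k, (A i j * A i k) * ((x j - m j) * (x k - m k)) := by
      funext x
      rw [sq, hudef, Finset.sum_mul_sum]
      apply Finset.sum_congr rfl; intro j _
      apply Finset.sum_congr rfl; intro k _
      ring
    have hu2_int : Integrable (fun x => u x ^ 2) q := by
      rw [hu2eq]
      exact integrable_finset_sum _ fun j _ =>
        integrable_finset_sum _ fun k _ => (hq_cov_int j k).const_mul _
    have hu2_mean : ∫ x, u x ^ 2 ∂q = σ₁^2 * ∑ j, (A i j)^2 := by
      rw [hu2eq, integral_finset_sum _ (fun j _ =>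
        integrable_finset_sum _ fun k _ => (hq_cov_int j k).const_mul _)]
      have : ∀ j, ∫ x, ∑ k, (A i j * A i k) * ((x j - m j) * (x k - m k)) ∂q
          = σ₁^2 * (A i j)^2 := by
        intro j
        rw [integral_finset_sum _ (fun k _ => (hq_cov_int j k).const_mul _)]
        simp only [integral_const_mul, hq_cov, Matrix.smul_apply, Matrix.one_apply,
          smul_eq_mul, mul_ite, mul_one, mul_zero]
        rw [Finset.sum_ite_eq (Finset.univ : Finset (Fin dx)) j
          (fun k => A i j * A i k * σ₁^2)]
        simp [sq]; ring
      rw [Finset.sum_congr rfl (fun j _ => this j), ← Finset.mul_sum]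
    constructor
    · have : (fun x => (y i - A.mulVec x i)^2)
          = fun x => (y i - A.mulVec m i)^2 - (2*(y i - A.mulVec m i)) * u x + u x ^ 2 :=
        funext hrw
      rw [this]
      exact ((integrable_const _).sub (hu_int.const_mul _)).add hu2_int
    · have heq : (fun x => (y i - A.mulVec x i)^2)
          = fun x => (y i - A.mulVec m i)^2 - (2*(y i - A.mulVec m i)) * u x + u x ^ 2 :=
        funext hrw
      have hint1 : Integrable
          (fun x => (y i - A.mulVec m i)^2 - (2*(y i - A.mulVec m i)) * u x) q :=
        (integrable_const _).sub (hu_int.const_mul _)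
      have hint0 : Integrable (fun x => (2*(y i - A.mulVec m i)) * u x) q :=
        hu_int.const_mul _
      rw [heq, integral_add hint1 hu2_int, integral_sub (integrable_const _) hint0,
        integral_const, integral_const_mul, hu_mean, hu2_mean]
      simp
  -- the sum of squares
  set S : (Fin dx → ℝ) → ℝ := fun x => ∑ i, (y i - A.mulVec x i)^2 with hSdef
  have hS_int : Integrable S q := integrable_finset_sum _ fun i _ => (key i).1
  have hS_mean : ∫ x, S x ∂q
      = (∑ i, (y i - A.mulVec m i)^2) + σ₁^2 * ∑ i, ∑ j, (A i j)^2 := by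
    rw [hSdef]
    rw [integral_finset_sum _ fun i _ => (key i).1]
    rw [Finset.sum_congr rfl (fun i _ => (key i).2), Finset.sum_add_distrib, ← Finset.mul_sum]
  have htrace : (Aᵀ * A).trace = ∑ i, ∑ j, (A i j)^2 := by
    rw [Matrix.trace]
    simp only [Matrix.diag_apply, Matrix.mul_apply, Matrix.transpose_apply, ← sq]
    exact Finset.sum_comm
  -- log p
  have hlogp : ∀ x, Real.log (p x) = Real.log c - S x / (2 * σe ^ 2) := by
    intro x
    rw [hp]
    rw [Real.log_mul (ne_of_gt hcpos) (Real.exp_ne_zero _), Real.log_exp]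
    ring
  have hlogp_int : Integrable (fun x => Real.log (p x)) q := by
    have : (fun x => Real.log (p x)) = fun x => Real.log c - S x / (2 * σe ^ 2) :=
      funext hlogp
    rw [this]
    exact (integrable_const _).sub (hS_int.div_const _)
  have hlogp_mean : ∫ x, Real.log (p x) ∂q
      = Real.log c - (∫ x, S x ∂q) / (2 * σe ^ 2) := by
    have : (fun x => Real.log (p x)) = fun x => Real.log c - S x / (2 * σe ^ 2) :=
      funext hlogp
    rw [this, integral_sub (integrable_const _) (hS_int.div_const _), integral_const,
      integral_div]
    simp
  -- ELBO
  set f : (Fin dx → ℝ) → ℝ := fun x => (q.rnDeriv πX x).toReal with hfdef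
  have hf_meas : Measurable f := (Measure.measurable_rnDeriv q πX).ennreal_toReal
  have hp_meas : Measurable p := by
    rw [hp]
    simp only [Matrix.mulVec, dotProduct]
    fun_prop
  set g : (Fin dx → ℝ) → ℝ := fun x => p x / f x with hgdef
  have hg_nonneg : ∀ x, 0 ≤ g x := fun x => div_nonneg (hppos x).le ENNReal.toReal_nonneg
  have hfg_le : ∀ x, f x * g x ≤ p x := by
    intro x
    rcases eq_or_ne (f x) 0 with h | h
    · simp [hgdef, h, (hppos x).le]
    · rw [hgdef]
      simp only
      rw [mul_div_cancel₀ _ h]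
  have hfg_nonneg : ∀ x, 0 ≤ f x * g x :=
    fun x => mul_nonneg ENNReal.toReal_nonneg (hg_nonneg x)
  have hfg_int : Integrable (fun x => f x * g x) πX := by
    refine Integrable.mono hp_int ((hf_meas.mul ((hp_meas.div hf_meas))).aestronglyMeasurable) ?_
    refine Filter.Eventually.of_forall fun x => ?_
    rw [Real.norm_eq_abs, Real.norm_eq_abs, abs_of_nonneg (hfg_nonneg x),
      abs_of_nonneg (hppos x).le]
    exact hfg_le x
  haveI := Measure.haveLebesgueDecomposition_of_sigmaFinite q πX
  have hg_int : Integrable g q := by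
    refine (integrable_rnDeriv_smul_iff hac).mp ?_
    simpa only [smul_eq_mul] using hfg_int
  set t : ℝ := ∫ x, g x ∂q with htdef
  have ht_eq : t = ∫ x, f x * g x ∂πX := by
    rw [htdef, ← integral_rnDeriv_smul hac (f := g)]
    simp only [smul_eq_mul]
    rfl
  have ht_le : t ≤ ∫ x, p x ∂πX := by
    rw [ht_eq]
    exact integral_mono hfg_int hp_int hfg_le
  have hg_pos_ae : ∀ᵐ x ∂q, 0 < g x := by
    filter_upwards [hac.ae_le (Measure.rnDeriv_lt_top q πX), Measure.rnDeriv_pos hac]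
      with x hlt hpos
    exact div_pos (hppos x) (ENNReal.toReal_pos hpos.ne' hlt.ne)
  have ht_pos : 0 < t := by
    rw [htdef, integral_pos_iff_support_of_nonneg_ae (Filter.Eventually.of_forall hg_nonneg) hg_int]
    have h1 : {x | 0 < g x} ⊆ Function.support g := fun x hx => ne_of_gt hx
    have h3 : q {x | 0 < g x} = 1 := by
      refine (prob_compl_eq_zero_iff
        (measurableSet_lt measurable_const (hp_meas.div hf_meas))).mp ?_
      rw [Set.compl_setOf]
      exact ae_iff.mp hg_pos_ae
    calc (0:ENNReal) < 1 := by norm_num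
    _ = q {x | 0 < g x} := h3.symm
    _ ≤ q (Function.support g) := measure_mono h1
  have hlog_g_ae : ∀ᵐ x ∂q, Real.log (g x) = Real.log (p x) - Real.log (f x) := by
    filter_upwards [hg_pos_ae, Measure.rnDeriv_pos hac, hac.ae_le (Measure.rnDeriv_lt_top q πX)]
      with x _ hpos hlt
    rw [hgdef]
    exact Real.log_div (hppos x).ne' (ENNReal.toReal_pos hpos.ne' hlt.ne).ne'
  have hlogg_int : Integrable (fun x => Real.log (g x)) q :=
    (hlogp_int.sub hKL_int).congr (by filter_upwards [hlog_g_ae] with x hx using hx.symm)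
  have hjensen : ∫ x, Real.log (g x) ∂q ≤ Real.log t := by
    have hbnd : ∀ᵐ x ∂q, Real.log (g x) ≤ g x / t - 1 + Real.log t := by
      filter_upwards [hg_pos_ae] with x hx
      have h1 : Real.log (g x / t) ≤ g x / t - 1 :=
        Real.log_le_sub_one_of_pos (div_pos hx ht_pos)
      rw [Real.log_div hx.ne' ht_pos.ne'] at h1
      linarith
    have hi1 : Integrable (fun x => g x / t - 1) q :=
      (hg_int.div_const t).sub (integrable_const 1)
    have h2 : ∫ x, (g x / t - 1 + Real.log t) ∂q = Real.log t := by
      rw [integral_add hi1 (integrable_const _),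
        integral_sub (hg_int.div_const t) (integrable_const 1), integral_div, ← htdef,
        div_self ht_pos.ne', integral_const, integral_const]
      simp
    calc ∫ x, Real.log (g x) ∂q
        ≤ ∫ x, (g x / t - 1 + Real.log t) ∂q := by
          refine integral_mono_ae hlogg_int ?_ hbnd
          exact hi1.add (integrable_const _)
      _ = Real.log t := h2
  have helbo : ∫ x, Real.log (p x) ∂q - ∫ x, Real.log (f x) ∂q
      ≤ Real.log (∫ x, p x ∂πX) := by
    have h1 : ∫ x, Real.log (g x) ∂q
        = ∫ x, Real.log (p x) ∂q - ∫ x, Real.log (f x) ∂q := by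
      rw [← integral_sub hlogp_int hKL_int]
      exact integral_congr_ae hlog_g_ae
    have h2 : Real.log t ≤ Real.log (∫ x, p x ∂πX) := Real.log_le_log ht_pos ht_le
    linarith [hjensen]
  -- final arithmetic
  have hlogc : Real.log c = (-(dy:ℝ)/2) * Real.log (2 * Real.pi * σe ^ 2) :=
    Real.log_rpow h2π _
  rw [htrace]
  have h2σ : (0:ℝ) < 2 * σe ^ 2 := by positivity
  rw [hlogp_mean, hS_mean] at helbo
  have hKL := helbo
  rw [hlogc] at hKL
  have : (∑ i, (y i - A.mulVec m i)^2 + σ₁^2 * ∑ i, ∑ j, (A i j)^2) / (2 * σe ^ 2)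
      = (1 / (2 * σe ^ 2)) * ∑ i, (y i - A.mulVec m i) ^ 2
        + σ₁ ^ 2 * (∑ i, ∑ j, (A i j)^2) / (2 * σe ^ 2) := by
    field_simp
  rw [this] at hKL
  linarith
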